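/- The function t ↦ P_c(t) is monotone nondecreasing on [0,1]. (This is property 2 of the paper's Lemma 3: the successful transmission probability of a cached file increases with its caching probability.) -/

import Mathlib

open MeasureTheory Finset

/-- `L_0(t) = 2t·∫_1^∞ τu/(u^β+τ) du + 2(1−t)·∫_0^∞ τu/(u^β+τ) du`. -/
noncomputable def L0 (β τ t : ℝ) : ℝ :=
  2 * t * (∫ u in Set.Ioi (1 : ℝ), τ * u / (u ^ β + τ)) +
    2 * (1 - t) * (∫ u in Set.Ioi (0 : ℝ), τ * u / (u ^ β + τ))

/-- `L_i(t) = 2t·∫_1^∞ τ^i u^{β+1}/(u^β+τ)^{i+1} du + 2(1−t)·∫_0^∞ τ^i u^{β+1}/(u^β+τ)^{i+1} du`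
for integers `i ≥ 1`. -/
noncomputable def Li (β τ : ℝ) (i : ℕ) (t : ℝ) : ℝ :=
  2 * t * (∫ u in Set.Ioi (1 : ℝ), τ ^ i * u ^ (β + 1) / (u ^ β + τ) ^ (i + 1)) +
    2 * (1 - t) * (∫ u in Set.Ioi (0 : ℝ), τ ^ i * u ^ (β + 1) / (u ^ β + τ) ^ (i + 1))

/-- The strictly lower-triangular Toeplitz matrix `D(t)` with `(D(t))_{jk} = L_{j−k}(t)` for
`j > k` and `0` otherwise. -/
noncomputable def Dmat (β τ : ℝ) (N : ℕ) (t : ℝ) : Matrix (Fin N) (Fin N) ℝ :=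
  fun j k => if (k : ℕ) < (j : ℕ) then Li β τ ((j : ℕ) - (k : ℕ)) t else 0

/-- The induced `ℓ1` matrix norm `‖M‖₁ = max_{1≤j≤N} ∑_{i=1}^N |M_{ij}|`. -/
noncomputable def matNorm1 {N : ℕ} (M : Matrix (Fin N) (Fin N) ℝ) : ℝ :=
  ⨆ j : Fin N, ∑ i : Fin N, |M i j|

/-- The successful transmission probability of a cached file stored with caching probability `t`:
`P_c(t) = (t/(t+L_0(t)))·‖(I − (1/(t+L_0(t)))·D(t))^{−1}‖₁`. -/
noncomputable def Pc (β τ : ℝ) (N : ℕ) (t : ℝ) : ℝ :=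
  (t / (t + L0 β τ t)) *
    matNorm1 ((1 - (1 / (t + L0 β τ t)) • Dmat β τ N t)⁻¹)


section PcAuxSection
open Set

namespace PcAux

/-- Inverse sequence of a sequence with invertible leading coefficient. -/
noncomputable def invSeq (w : ℕ → ℝ) : ℕ → ℝ
  | 0 => (w 0)⁻¹
  | (n+1) => -(w 0)⁻¹ * ∑ i ∈ Finset.range (n+1), w (i+1) * invSeq w (n - i)
  decreasing_by exact Nat.lt_succ_of_le (Nat.sub_le n i)

lemma invSeq_zero (w : ℕ → ℝ) : invSeq w 0 = (w 0)⁻¹ := by rw [invSeq]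

lemma invSeq_succ (w : ℕ → ℝ) (n : ℕ) :
    invSeq w (n+1) = -(w 0)⁻¹ * ∑ i ∈ Finset.range (n+1), w (i+1) * invSeq w (n - i) := by
  rw [invSeq]

/-- Convolution of sequences, via power series. -/
noncomputable def conv (a b : ℕ → ℝ) (n : ℕ) : ℝ :=
  PowerSeries.coeff n (PowerSeries.mk a * PowerSeries.mk b)

lemma conv_eq_sum (a b : ℕ → ℝ) (n : ℕ) :
    conv a b n = ∑ p ∈ range (n+1), a p * b (n - p) := by
  rw [conv, PowerSeries.coeff_mul, Finset.Nat.sum_antidiagonal_eq_sum_range_succ_mk]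
  simp [PowerSeries.coeff_mk]

lemma conv_invSeq (w : ℕ → ℝ) (hw : w 0 ≠ 0) (n : ℕ) :
    conv w (invSeq w) n = if n = 0 then 1 else 0 := by
  cases n with
  | zero => simp [conv_eq_sum, invSeq_zero, mul_inv_cancel₀ hw]
  | succ n =>
      rw [conv_eq_sum, Finset.sum_range_succ']
      have h1 : ∀ i ∈ range (n+1), w (i+1) * invSeq w (n + 1 - (i+1))
          = w (i+1) * invSeq w (n - i) := by
        intro i _; congr 2; omega
      rw [Finset.sum_congr rfl h1]
      simp only [Nat.sub_zero]
      rw [invSeq_succ]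
      have : w 0 * ((w 0)⁻¹ * ∑ i ∈ range (n+1), w (i+1) * invSeq w (n - i))
          = ∑ i ∈ range (n+1), w (i+1) * invSeq w (n - i) := by
        rw [← mul_assoc, mul_inv_cancel₀ hw, one_mul]
      simp only [Nat.succ_ne_zero, if_false]
      ring_nf
      ring_nf at this
      linarith [this]

lemma invSeq_nonneg (w : ℕ → ℝ) (h0 : 0 < w 0) (h1 : ∀ n, w (n+1) ≤ 0) (n : ℕ) :
    0 ≤ invSeq w n := by
  induction n using Nat.strong_induction_on with
  | _ n ih =>
    cases n with
    | zero => simpa [invSeq_zero] using inv_nonneg.2 h0.le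
    | succ n =>
        rw [invSeq_succ]
        have hs : ∑ i ∈ range (n+1), w (i+1) * invSeq w (n - i) ≤ 0 := by
          apply Finset.sum_nonpos
          intro i _
          exact mul_nonpos_of_nonpos_of_nonneg (h1 i) (ih _ (Nat.lt_succ_of_le (Nat.sub_le n i)))
        nlinarith [inv_nonneg.2 h0.le]

/-- Lower-triangular Toeplitz matrix with symbol `a`. -/
noncomputable def T (N : ℕ) (a : ℕ → ℝ) : Matrix (Fin N) (Fin N) ℝ :=
  Matrix.of fun i j => if (j : ℕ) ≤ (i : ℕ) then a ((i : ℕ) - (j : ℕ)) else 0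

lemma T_apply (N : ℕ) (a : ℕ → ℝ) (i j : Fin N) :
    T N a i j = if (j : ℕ) ≤ (i : ℕ) then a ((i : ℕ) - (j : ℕ)) else 0 := rfl

lemma T_mul (N : ℕ) (a b : ℕ → ℝ) : T N a * T N b = T N (conv a b) := by
  ext i j
  rw [Matrix.mul_apply, T_apply]
  set g : ℕ → ℝ := fun l => (if l ≤ (i:ℕ) then a ((i:ℕ) - l) else 0) *
      (if (j:ℕ) ≤ l then b (l - (j:ℕ)) else 0) with hg
  have step1 : ∑ l : Fin N, T N a i l * T N b l j = ∑ l ∈ range N, g l := by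
    rw [← Fin.sum_univ_eq_sum_range g N]
    exact Finset.sum_congr rfl (fun l _ => by rw [T_apply, T_apply, hg])
  rw [step1]
  by_cases h : (j : ℕ) ≤ (i : ℕ)
  · rw [if_pos h, conv_eq_sum]
    rw [← Finset.sum_subset (show Finset.Icc (j:ℕ) (i:ℕ) ⊆ range N from by
        intro l hl; simp only [Finset.mem_Icc] at hl; exact Finset.mem_range.2 (lt_of_le_of_lt hl.2 i.isLt))
      (by intro l _ hl; simp only [Finset.mem_Icc, not_and_or, not_le] at hl
          rcases hl with hl | hl
          · rw [hg]; simp only [if_neg (by omega : ¬ (j:ℕ) ≤ l), mul_zero]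
          · rw [hg]; simp only [if_neg (by omega : ¬ l ≤ (i:ℕ)), zero_mul])]
    apply Finset.sum_nbij' (i := fun l => (i:ℕ) - l) (j := fun p => (i:ℕ) - p)
    · intro l hl; simp only [Finset.mem_Icc] at hl; exact Finset.mem_range.2 (by omega)
    · intro p hp; simp only [Finset.mem_range] at hp; simp only [Finset.mem_Icc]; omega
    · intro l hl; simp only [Finset.mem_Icc] at hl; omega
    · intro p hp; simp only [Finset.mem_range] at hp; omega
    · intro l hl; simp only [Finset.mem_Icc] at hl
      simp only [hg, if_pos hl.2, if_pos hl.1]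
      congr 2
      omega
  · rw [if_neg h]
    apply Finset.sum_eq_zero
    intro l _
    rcases le_or_gt l (i:ℕ) with hl | hl
    · rw [hg]; simp only [if_neg (by omega : ¬ (j:ℕ) ≤ l), mul_zero]
    · rw [hg]; simp only [if_neg (by omega : ¬ l ≤ (i:ℕ)), zero_mul]

lemma T_one (N : ℕ) : T N (fun n => if n = 0 then 1 else 0) = 1 := by
  ext i j
  rw [T_apply, Matrix.one_apply]
  by_cases h : (j : ℕ) ≤ (i : ℕ)
  · rw [if_pos h]
    rcases eq_or_ne i j with rfl | h2
    · simp
    · rw [if_neg h2, if_neg (fun h0 => h2 (Fin.ext (by omega)))]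
  · rw [if_neg h, if_neg (by intro hij; exact h (by rw [hij]))]

variable {β τ : ℝ}

lemma denom_pos (hτ : 0 < τ) (u : ℝ) (hu : 0 ≤ u) : 0 < u ^ β + τ :=
  add_pos_of_nonneg_of_pos (Real.rpow_nonneg hu β) hτ

lemma contOn_rpow (hβ : 0 < β) : ContinuousOn (fun u : ℝ => u ^ β) (Icc 0 1) := fun x _ =>
  (Real.continuousAt_rpow_const x β (Or.inr hβ.le)).continuousWithinAt

lemma meas_f0 : Measurable (fun u : ℝ => τ * u / (u ^ β + τ)) := by
  fun_prop

lemma meas_ell (i : ℕ) :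
    Measurable (fun u : ℝ => τ ^ i * u ^ (β + 1) / (u ^ β + τ) ^ (i + 1)) := by
  fun_prop

lemma int_f0 (hβ : 2 < β) (hτ : 0 < τ) :
    IntegrableOn (fun u : ℝ => τ * u / (u ^ β + τ)) (Ioi 0) := by
  have hβ0 : (0:ℝ) < β := by linarith
  rw [← Set.Ioc_union_Ioi_eq_Ioi (zero_le_one : (0:ℝ) ≤ 1)]
  apply IntegrableOn.union
  · -- on Ioc 0 1 : continuous on Icc 0 1
    apply (ContinuousOn.integrableOn_Icc ?_).mono_set Set.Ioc_subset_Icc_self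
    apply ContinuousOn.div
    · exact (continuous_const.mul continuous_id).continuousOn
    · exact (contOn_rpow hβ0).add continuousOn_const
    · exact fun u hu => (denom_pos hτ u hu.1).ne'
  · -- on Ioi 1 : dominated by τ * u ^ (1 - β)
    have hg : IntegrableOn (fun u : ℝ => τ * u ^ (1 - β)) (Ioi 1) :=
      (integrableOn_Ioi_rpow_of_lt (by linarith : 1 - β < -1) one_pos).const_mul τ
    apply Integrable.mono' hg (meas_f0.aestronglyMeasurable.restrict)
    rw [ae_restrict_iff' measurableSet_Ioi]
    apply ae_of_all
    intro u hu
    have hu1 : (1:ℝ) < u := hu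
    have hu0 : (0:ℝ) < u := by linarith
    have hub : (0:ℝ) < u ^ β := Real.rpow_pos_of_pos hu0 β
    have h1 : τ * u / (u ^ β + τ) ≤ τ * u / u ^ β := by
      apply div_le_div_of_nonneg_left (by positivity) hub (by linarith)
    have h2 : τ * u / u ^ β = τ * u ^ (1 - β) := by
      rw [Real.rpow_sub hu0, Real.rpow_one, mul_div_assoc]
    rw [Real.norm_eq_abs, abs_of_nonneg (by positivity)]
    rw [← h2]; exact h1

lemma int_ell (hβ : 2 < β) (hτ : 0 < τ) (i : ℕ) (hi : 1 ≤ i) :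
    IntegrableOn (fun u : ℝ => τ ^ i * u ^ (β + 1) / (u ^ β + τ) ^ (i + 1)) (Ioi 0) := by
  have hβ0 : (0:ℝ) < β := by linarith
  rw [← Set.Ioc_union_Ioi_eq_Ioi (zero_le_one : (0:ℝ) ≤ 1)]
  apply IntegrableOn.union
  · apply (ContinuousOn.integrableOn_Icc ?_).mono_set Set.Ioc_subset_Icc_self
    apply ContinuousOn.div
    · exact continuousOn_const.mul (fun x _ =>
        (Real.continuousAt_rpow_const x (β+1) (Or.inr (by linarith))).continuousWithinAt)
    · exact ((contOn_rpow hβ0).add continuousOn_const).pow (i+1)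
    · exact fun u hu => (pow_pos (denom_pos hτ u hu.1) (i+1)).ne'
  · have hg : IntegrableOn (fun u : ℝ => τ ^ i * u ^ (1 - β)) (Ioi 1) :=
      (integrableOn_Ioi_rpow_of_lt (by linarith : 1 - β < -1) one_pos).const_mul (τ ^ i)
    apply Integrable.mono' hg ((meas_ell i).aestronglyMeasurable.restrict)
    rw [ae_restrict_iff' measurableSet_Ioi]
    apply ae_of_all
    intro u hu
    have hu1 : (1:ℝ) < u := hu
    have hu0 : (0:ℝ) < u := by linarith
    have hub : (0:ℝ) < u ^ β := Real.rpow_pos_of_pos hu0 β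
    have hpow : (u ^ β) ^ (i+1) ≤ (u ^ β + τ) ^ (i+1) :=
      pow_le_pow_left₀ hub.le (by linarith) (i+1)
    have h1 : τ ^ i * u ^ (β+1) / (u ^ β + τ) ^ (i + 1)
        ≤ τ ^ i * u ^ (β+1) / (u ^ β) ^ (i + 1) := by
      apply div_le_div_of_nonneg_left (by positivity) (pow_pos hub (i+1)) hpow
    have h2 : (u ^ β) ^ (i+1) = u ^ (β * (i+1)) := by
      rw [← Real.rpow_natCast (u ^ β) (i+1), ← Real.rpow_mul hu0.le]
      push_cast
      ring_nf
    have h3 : τ ^ i * u ^ (β+1) / (u ^ β) ^ (i + 1) = τ ^ i * u ^ (β + 1 - β * (i+1)) := by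
      rw [h2, Real.rpow_sub hu0, mul_div_assoc]
    have h4 : u ^ (β + 1 - β * (i+1)) ≤ u ^ (1 - β) := by
      apply Real.rpow_le_rpow_of_exponent_le hu1.le
      have : (1:ℝ) ≤ (i:ℝ) := by exact_mod_cast hi
      push_cast
      nlinarith
    rw [Real.norm_eq_abs, abs_of_nonneg (by positivity)]
    calc τ ^ i * u ^ (β+1) / (u ^ β + τ) ^ (i + 1)
        ≤ τ ^ i * u ^ (β+1) / (u ^ β) ^ (i + 1) := h1
      _ = τ ^ i * u ^ (β + 1 - β * (i+1)) := h3
      _ ≤ τ ^ i * u ^ (1 - β) := by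
          apply mul_le_mul_of_nonneg_left h4 (by positivity)

lemma B_pos (hβ : 2 < β) (hτ : 0 < τ) :
    0 < ∫ u in Ioi (0:ℝ), τ * u / (u ^ β + τ) := by
  rw [setIntegral_pos_iff_support_of_nonneg_ae ?hnn (int_f0 hβ hτ)]
  case hnn =>
    filter_upwards [self_mem_ae_restrict measurableSet_Ioi] with u hu
    have hu0 : (0:ℝ) < u := hu
    positivity
  · have hsub : Ioi (0:ℝ) ⊆ Function.support (fun u : ℝ => τ * u / (u ^ β + τ)) := by
      intro u hu
      have hu0 : (0:ℝ) < u := hu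
      have : 0 < τ * u / (u ^ β + τ) := by positivity
      exact this.ne'
    rw [Set.inter_eq_right.2 hsub, Real.volume_Ioi]
    exact ENNReal.zero_lt_top

lemma geom_id (hβ : 2 < β) (hτ : 0 < τ) (n : ℕ) {u : ℝ} (hu : 0 < u) :
    τ * u / (u ^ β + τ) - ∑ i ∈ range n, τ ^ (i+1) * u ^ (β + 1) / (u ^ β + τ) ^ (i + 1 + 1)
      = τ ^ (n+1) * u / (u ^ β + τ) ^ (n+1) := by
  induction n with
  | zero => simp
  | succ n ih =>
      rw [Finset.sum_range_succ, ← sub_sub, ih]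
      have hd : 0 < u ^ β + τ := denom_pos hτ u hu.le
      have hub : u ^ (β + 1) = u ^ β * u := by
        rw [Real.rpow_add hu, Real.rpow_one]
      rw [hub]
      field_simp
      ring

lemma partial_sum_le (hβ : 2 < β) (hτ : 0 < τ) (n : ℕ) :
    ∑ i ∈ range n, (∫ u in Ioi (0:ℝ), τ ^ (i+1) * u ^ (β + 1) / (u ^ β + τ) ^ (i + 1 + 1))
      ≤ ∫ u in Ioi (0:ℝ), τ * u / (u ^ β + τ) := by
  have hint : ∀ i ∈ range n, IntegrableOn
      (fun u : ℝ => τ ^ (i+1) * u ^ (β + 1) / (u ^ β + τ) ^ (i + 1 + 1)) (Ioi 0) :=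
    fun i _ => int_ell hβ hτ (i+1) (Nat.le_add_left 1 i)
  have hsum : ∑ i ∈ range n, (∫ u in Ioi (0:ℝ), τ ^ (i+1) * u ^ (β + 1) / (u ^ β + τ) ^ (i + 1 + 1))
      = ∫ u in Ioi (0:ℝ), ∑ i ∈ range n, τ ^ (i+1) * u ^ (β + 1) / (u ^ β + τ) ^ (i + 1 + 1) :=
    (integral_finset_sum (range n) hint).symm
  have key : 0 ≤ ∫ u in Ioi (0:ℝ),
      (τ * u / (u ^ β + τ) - ∑ i ∈ range n, τ ^ (i+1) * u ^ (β + 1) / (u ^ β + τ) ^ (i + 1 + 1)) := by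
    rw [setIntegral_congr_fun measurableSet_Ioi
      (fun u hu => geom_id hβ hτ n (show (0:ℝ) < u from hu))]
    apply setIntegral_nonneg measurableSet_Ioi
    intro u hu
    have hu0 : (0:ℝ) < u := hu
    have hd : 0 < u ^ β + τ := denom_pos hτ u hu0.le
    positivity
  rw [integral_sub (int_f0 hβ hτ) (integrable_finset_sum (range n) hint)] at key
  rw [hsum]
  linarith

variable {β τ : ℝ}

/-- The symbol sequence of the matrix `s•1 - D(t)`. -/
noncomputable def wseq (β τ t : ℝ) : ℕ → ℝ
  | 0 => t + L0 β τ t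
  | (n+1) => -(Li β τ (n+1) t)

lemma wseq_zero (β τ t : ℝ) : wseq β τ t 0 = t + L0 β τ t := rfl

lemma wseq_succ (β τ t : ℝ) (n : ℕ) : wseq β τ t (n+1) = -(Li β τ (n+1) t) := rfl

lemma int1_nonneg (hτ : 0 < τ) : 0 ≤ ∫ u in Ioi (1:ℝ), τ * u / (u ^ β + τ) := by
  apply setIntegral_nonneg measurableSet_Ioi
  intro u hu
  have hu0 : (0:ℝ) < u := lt_trans one_pos hu
  positivity

lemma int0_nonneg (hτ : 0 < τ) : 0 ≤ ∫ u in Ioi (0:ℝ), τ * u / (u ^ β + τ) := by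
  apply setIntegral_nonneg measurableSet_Ioi
  intro u hu
  have hu0 : (0:ℝ) < u := hu
  positivity

lemma int1i_nonneg (hτ : 0 < τ) (i : ℕ) :
    0 ≤ ∫ u in Ioi (1:ℝ), τ ^ i * u ^ (β + 1) / (u ^ β + τ) ^ (i + 1) := by
  apply setIntegral_nonneg measurableSet_Ioi
  intro u hu
  have hu0 : (0:ℝ) < u := lt_trans one_pos hu
  have hd : 0 < u ^ β + τ := denom_pos hτ u hu0.le
  positivity

lemma int0i_nonneg (hτ : 0 < τ) (i : ℕ) :
    0 ≤ ∫ u in Ioi (0:ℝ), τ ^ i * u ^ (β + 1) / (u ^ β + τ) ^ (i + 1) := by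
  apply setIntegral_nonneg measurableSet_Ioi
  intro u hu
  have hu0 : (0:ℝ) < u := hu
  have hd : 0 < u ^ β + τ := denom_pos hτ u hu0.le
  positivity

lemma Li_nonneg (hτ : 0 < τ) (i : ℕ) {t : ℝ} (ht : t ∈ Set.Icc (0:ℝ) 1) :
    0 ≤ Li β τ i t := by
  rw [Li]
  have h1 := int1i_nonneg (β := β) hτ i
  have h0 := int0i_nonneg (β := β) hτ i
  have ht0 := ht.1
  have ht1 := ht.2
  nlinarith

lemma s_pos (hβ : 2 < β) (hτ : 0 < τ) {t : ℝ} (ht : t ∈ Set.Icc (0:ℝ) 1) :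
    0 < t + L0 β τ t := by
  rw [L0]
  have h1 := int1_nonneg (β := β) hτ
  have h0 := B_pos hβ hτ
  have ht0 := ht.1
  have ht1 := ht.2
  rcases eq_or_lt_of_le ht0 with h | h
  · rw [← h]; simpa using h0
  · nlinarith

lemma matrix_eq (hβ : 2 < β) (hτ : 0 < τ) (N : ℕ) {t : ℝ} (ht : t ∈ Set.Icc (0:ℝ) 1) :
    (1 : Matrix (Fin N) (Fin N) ℝ) - (1 / (t + L0 β τ t)) • Dmat β τ N t
      = T N (fun n => (1 / (t + L0 β τ t)) * wseq β τ t n) := by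
  have hs : (t + L0 β τ t) ≠ 0 := (s_pos hβ hτ ht).ne'
  ext i j
  have hD : Dmat β τ N t i j = if (j:ℕ) < (i:ℕ) then Li β τ ((i:ℕ) - (j:ℕ)) t else 0 := rfl
  rw [Matrix.sub_apply, Matrix.smul_apply, Matrix.one_apply, T_apply, hD, smul_eq_mul]
  rcases lt_trichotomy ((j:ℕ)) ((i:ℕ)) with h | h | h
  · have hne : i ≠ j := fun hij => by rw [hij] at h; exact lt_irrefl _ h
    rw [if_neg hne, if_pos h, if_pos h.le]
    obtain ⟨n, hn⟩ : ∃ n, (i:ℕ) - (j:ℕ) = n + 1 := ⟨(i:ℕ) - (j:ℕ) - 1, by omega⟩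
    rw [hn, wseq_succ]
    ring
  · have he : i = j := Fin.ext h.symm
    rw [if_pos he, if_neg (by omega), if_pos (by omega),
      show (i:ℕ) - (j:ℕ) = 0 by omega, wseq_zero]
    field_simp
    ring
  · have hne : i ≠ j := fun hij => by rw [hij] at h; exact lt_irrefl _ h
    rw [if_neg hne, if_neg (by omega), if_neg (by omega)]
    ring

lemma conv_smul_smul (c d : ℝ) (a b : ℕ → ℝ) (n : ℕ) :
    conv (fun k => c * a k) (fun k => d * b k) n = (c * d) * conv a b n := by
  rw [conv_eq_sum, conv_eq_sum, Finset.mul_sum]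
  exact Finset.sum_congr rfl (fun p _ => by ring)

lemma inv_eq (hβ : 2 < β) (hτ : 0 < τ) (N : ℕ) {t : ℝ} (ht : t ∈ Set.Icc (0:ℝ) 1) :
    ((1 : Matrix (Fin N) (Fin N) ℝ) - (1 / (t + L0 β τ t)) • Dmat β τ N t)⁻¹
      = T N (fun n => (t + L0 β τ t) * invSeq (wseq β τ t) n) := by
  have hs : (t + L0 β τ t) ≠ 0 := (s_pos hβ hτ ht).ne'
  apply Matrix.inv_eq_right_inv
  have hconv : conv (fun n => (1 / (t + L0 β τ t)) * wseq β τ t n)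
      (fun n => (t + L0 β τ t) * invSeq (wseq β τ t) n)
      = fun n => if n = 0 then 1 else 0 := by
    funext n
    rw [conv_smul_smul, one_div, inv_mul_cancel₀ hs, one_mul]
    exact conv_invSeq (wseq β τ t) (by rw [wseq_zero]; exact hs) n
  rw [matrix_eq hβ hτ N ht, T_mul, hconv, T_one]

lemma colsum (N : ℕ) (v : ℕ → ℝ) (hv : ∀ n, 0 ≤ v n) (j : Fin N) :
    ∑ i : Fin N, |T N v i j| = ∑ m ∈ range (N - (j:ℕ)), v m := by
  have habs : ∀ i : Fin N, |T N v i j|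
      = (fun l : ℕ => if (j:ℕ) ≤ l then v (l - (j:ℕ)) else 0) (i:ℕ) := by
    intro i
    show |T N v i j| = if (j:ℕ) ≤ (i:ℕ) then v ((i:ℕ) - (j:ℕ)) else 0
    rw [T_apply]
    split
    · exact abs_of_nonneg (hv _)
    · exact abs_zero
  rw [Finset.sum_congr rfl (fun i _ => habs i),
    Fin.sum_univ_eq_sum_range (fun l : ℕ => if (j:ℕ) ≤ l then v (l - (j:ℕ)) else 0) N]
  rw [← Finset.sum_subset (show Finset.Ico ((j:ℕ)) N ⊆ range N from by
      intro l hl; rw [Finset.mem_Ico] at hl; exact Finset.mem_range.2 hl.2)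
    (by intro l _ hl
        rw [Finset.mem_Ico, not_and_or, not_le] at hl
        rcases hl with hl | hl
        · rw [if_neg (by omega)]
        · exact absurd (Finset.mem_range.1 ‹l ∈ range N›) (by omega))]
  apply Finset.sum_nbij' (i := fun l => l - (j:ℕ)) (j := fun m => m + (j:ℕ))
  · intro l hl; rw [Finset.mem_Ico] at hl; exact Finset.mem_range.2 (by omega)
  · intro m hm; rw [Finset.mem_range] at hm; rw [Finset.mem_Ico]; omega
  · intro l hl; rw [Finset.mem_Ico] at hl; omega
  · intro m hm; rw [Finset.mem_range] at hm; omega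
  · intro l hl; rw [Finset.mem_Ico] at hl; simp only [if_pos hl.1]

lemma matNorm1_T (N : ℕ) (hN : 0 < N) (v : ℕ → ℝ) (hv : ∀ n, 0 ≤ v n) :
    matNorm1 (T N v) = ∑ m ∈ range N, v m := by
  have : Nonempty (Fin N) := ⟨⟨0, hN⟩⟩
  rw [matNorm1]
  apply le_antisymm
  · apply ciSup_le
    intro j
    rw [colsum N v hv j]
    apply Finset.sum_le_sum_of_subset_of_nonneg
    · exact Finset.range_subset_range.2 (by omega)
    · exact fun m _ _ => hv m
  · have h0 : ∑ i : Fin N, |T N v i (⟨0, hN⟩ : Fin N)| = ∑ m ∈ range N, v m := by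
      rw [colsum N v hv]; norm_num
    rw [← h0]
    exact le_ciSup (f := fun j : Fin N => ∑ i : Fin N, |T N v i j|)
      (Set.Finite.bddAbove (Set.finite_range _)) (⟨0, hN⟩ : Fin N)

lemma Pc_eq (hβ : 2 < β) (hτ : 0 < τ) (N : ℕ) (hN : 1 ≤ N) {t : ℝ}
    (ht : t ∈ Set.Icc (0:ℝ) 1) :
    Pc β τ N t = t * ∑ m ∈ range N, invSeq (wseq β τ t) m := by
  have hs : 0 < t + L0 β τ t := s_pos hβ hτ ht
  have hw0 : 0 < wseq β τ t 0 := by rw [wseq_zero]; exact hs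
  have hw1 : ∀ n, wseq β τ t (n+1) ≤ 0 := by
    intro n; rw [wseq_succ]; simpa using Li_nonneg hτ (n+1) ht
  have hvpos : ∀ n, 0 ≤ (t + L0 β τ t) * invSeq (wseq β τ t) n :=
    fun n => mul_nonneg hs.le (invSeq_nonneg _ hw0 hw1 n)
  rw [Pc, inv_eq hβ hτ N ht, matNorm1_T N hN _ hvpos, ← Finset.mul_sum]
  field_simp

lemma wseq_affine (β τ : ℝ) {t1 t2 : ℝ} (n : ℕ) :
    t2 * wseq β τ t1 n - t1 * wseq β τ t2 n = (t2 - t1) * wseq β τ 0 n := by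
  cases n with
  | zero => rw [wseq_zero, wseq_zero, wseq_zero, L0, L0, L0]; ring
  | succ n => rw [wseq_succ, wseq_succ, wseq_succ, Li, Li, Li]; ring

lemma wseq_psum_nonneg (hβ : 2 < β) (hτ : 0 < τ) (p : ℕ) :
    0 ≤ ∑ q ∈ range (p+1), wseq β τ 0 q := by
  rw [Finset.sum_range_succ']
  have h1 : ∀ q, wseq β τ 0 (q+1)
      = -(2 * (∫ u in Ioi (0:ℝ), τ ^ (q+1) * u ^ (β + 1) / (u ^ β + τ) ^ (q + 1 + 1))) := by
    intro q; rw [wseq_succ, Li]; ring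
  have h0 : wseq β τ 0 0 = 2 * ∫ u in Ioi (0:ℝ), τ * u / (u ^ β + τ) := by
    rw [wseq_zero, L0]; ring
  rw [Finset.sum_congr rfl (fun q _ => h1 q), h0, Finset.sum_neg_distrib]
  have := partial_sum_le hβ hτ p
  have h2 : ∑ q ∈ range p, 2 * (∫ u in Ioi (0:ℝ), τ ^ (q+1) * u ^ (β + 1) / (u ^ β + τ) ^ (q + 1 + 1))
      = 2 * ∑ q ∈ range p, (∫ u in Ioi (0:ℝ), τ ^ (q+1) * u ^ (β + 1) / (u ^ β + τ) ^ (q + 1 + 1)) := by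
    rw [Finset.mul_sum]
  linarith [h2 ▸ (by linarith : (0:ℝ) ≤ 2 * (∫ u in Ioi (0:ℝ), τ * u / (u ^ β + τ))
      - 2 * ∑ q ∈ range p, (∫ u in Ioi (0:ℝ), τ ^ (q+1) * u ^ (β + 1) / (u ^ β + τ) ^ (q + 1 + 1)))]

end PcAux
end PcAuxSection


open PcAux PowerSeries in
/-- **Property 2 of the paper's Lemma 3**: the successful transmission probability of a cached
file, `t ↦ P_c(t)`, is monotone nondecreasing on `[0,1]`. -/
theorem Pc_monotoneOn (β τ : ℝ) (hβ : 2 < β) (hτ : 0 < τ) (N : ℕ) (hN : 1 ≤ N) :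
    MonotoneOn (Pc β τ N) (Set.Icc 0 1) := by
  intro t1 ht1 t2 ht2 h12
  rw [Pc_eq hβ hτ N hN ht1, Pc_eq hβ hτ N hN ht2]
  obtain ⟨K, rfl⟩ : ∃ K, N = K + 1 := ⟨N - 1, by omega⟩
  set w1 := wseq β τ t1 with hw1def
  set w2 := wseq β τ t2 with hw2def
  set w0 := wseq β τ 0 with hw0def
  set v1 := invSeq w1 with hv1def
  set v2 := invSeq w2 with hv2def
  have hs1 : 0 < w1 0 := by rw [hw1def, wseq_zero]; exact s_pos hβ hτ ht1
  have hs2 : 0 < w2 0 := by rw [hw2def, wseq_zero]; exact s_pos hβ hτ ht2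
  have hv1n : ∀ n, 0 ≤ v1 n := invSeq_nonneg w1 hs1
    (fun n => by rw [hw1def, wseq_succ]; simpa using Li_nonneg hτ (n+1) ht1)
  have hv2n : ∀ n, 0 ≤ v2 n := invSeq_nonneg w2 hs2
    (fun n => by rw [hw2def, wseq_succ]; simpa using Li_nonneg hτ (n+1) ht2)
  -- power series
  have e1 : PowerSeries.mk w1 * PowerSeries.mk v1 = 1 := by
    apply PowerSeries.ext
    intro n
    rw [PowerSeries.coeff_one]
    exact conv_invSeq w1 hs1.ne' n
  have e2 : PowerSeries.mk w2 * PowerSeries.mk v2 = 1 := by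
    apply PowerSeries.ext
    intro n
    rw [PowerSeries.coeff_one]
    exact conv_invSeq w2 hs2.ne' n
  have haff : (C t2) * PowerSeries.mk w1 - (C t1) * PowerSeries.mk w2
      = (C (t2 - t1)) * PowerSeries.mk w0 := by
    apply PowerSeries.ext
    intro n
    simp only [map_sub, sub_mul, PowerSeries.coeff_C_mul, PowerSeries.coeff_mk]
    have h := wseq_affine β τ (t1 := t1) (t2 := t2) n
    rw [← hw1def, ← hw2def, ← hw0def] at h
    linarith [h]
  have main : (C t2) * PowerSeries.mk v2 - (C t1) * PowerSeries.mk v1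
      = (C (t2 - t1)) * (PowerSeries.mk v1 * PowerSeries.mk w0 * PowerSeries.mk v2) := by
    linear_combination (PowerSeries.mk v1 * PowerSeries.mk v2) * haff
      - (C t2 * PowerSeries.mk v2) * e1 + (C t1 * PowerSeries.mk v1) * e2
  have hcoeff : ∀ m, t2 * v2 m - t1 * v1 m
      = (t2 - t1) * PowerSeries.coeff m (PowerSeries.mk v1 * PowerSeries.mk w0 * PowerSeries.mk v2) := by
    intro m
    have h := congrArg (PowerSeries.coeff m) main
    simp only [map_sub, sub_mul, PowerSeries.coeff_C_mul, PowerSeries.coeff_mk] at h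
    rw [sub_mul]
    exact h
  rw [← sub_nonneg, Finset.mul_sum, Finset.mul_sum, ← Finset.sum_sub_distrib]
  rw [Finset.sum_congr rfl (fun m _ => hcoeff m), ← Finset.mul_sum]
  apply mul_nonneg (by linarith)
  -- the sum of the first K+1 coefficients
  have hsum : ∑ m ∈ range (K+1),
      PowerSeries.coeff m (PowerSeries.mk v1 * PowerSeries.mk w0 * PowerSeries.mk v2)
      = PowerSeries.coeff K ((PowerSeries.mk w0 * PowerSeries.mk (fun _ => (1:ℝ)))
          * (PowerSeries.mk v1 * PowerSeries.mk v2)) := by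
    rw [show (PowerSeries.mk w0 * PowerSeries.mk (fun _ => (1:ℝ)))
          * (PowerSeries.mk v1 * PowerSeries.mk v2)
        = (PowerSeries.mk v1 * PowerSeries.mk w0 * PowerSeries.mk v2)
          * PowerSeries.mk (fun _ => (1:ℝ)) by ring]
    rw [PowerSeries.coeff_mul, Finset.Nat.sum_antidiagonal_eq_sum_range_succ_mk]
    simp [PowerSeries.coeff_mk]
  rw [hsum, PowerSeries.coeff_mul]
  apply Finset.sum_nonneg
  intro p _
  apply mul_nonneg
  · rw [PowerSeries.coeff_mul, Finset.Nat.sum_antidiagonal_eq_sum_range_succ_mk]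
    simp only [PowerSeries.coeff_mk, mul_one]
    exact wseq_psum_nonneg hβ hτ p.1
  · rw [PowerSeries.coeff_mul, Finset.Nat.sum_antidiagonal_eq_sum_range_succ_mk]
    simp only [PowerSeries.coeff_mk]
    exact Finset.sum_nonneg (fun q _ => mul_nonneg (hv1n q) (hv2n _))
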